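/- Each of the three 3DSMI instances of dimension 3 obtained from the instance with rank-1 edges 0→1, 1→2, 2→3, 3→4, 4→5, 5→0, 6→4, 7→8, 8→0, rank-2 edges 4→8, 8→6, 0→7, 1→5, 5→3, 3→1, and rank-3 edge 4→2 by additionally adjoining the edge 7→2 of rank 2, or the edge 6→1 of rank 2, or both of these edges, admits no weakly stable matching. -/
import Mathlib


/-- A 3DSMI instance of dimension `n`: a directed graph on a vertex set `V`
partitioned into three genders (men, women, dogs), each of size `n`, where every
edge goes from gender `g` to gender `g+1`, together with a rank function such that
for every vertex of out-degree `k` the ranks of its outgoing edges are exactly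
`1, …, k`. -/
structure TDSMI (V : Type) [Fintype V] [DecidableEq V] (n : ℕ) where
  E : V → V → Bool
  r : V → V → ℕ
  gender : V → Fin 3
  gender_card : ∀ g : Fin 3, (Finset.univ.filter fun v => gender v = g).card = n
  edge_gender : ∀ v w : V, E v w → gender w = gender v + 1
  rank_bij : ∀ v : V,
    (Finset.univ.filter fun w => E v w).image (r v)
      = Finset.Icc 1 (Finset.univ.filter fun w => E v w).card

namespace TDSMI

variable {V : Type} [Fintype V] [DecidableEq V] {n : ℕ}

/-- A family: a directed 3-cycle `a → b → c → a`. -/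
def IsFamily (G : TDSMI V n) (a b c : V) : Prop :=
  G.E a b ∧ G.E b c ∧ G.E c a

/-- `v` is one of the vertices of the triple `t`. -/
def MemTriple (v : V) (t : V × V × V) : Prop :=
  v = t.1 ∨ v = t.2.1 ∨ v = t.2.2

/-- A matching: a set of pairwise vertex-disjoint families. -/
def IsMatching (G : TDSMI V n) (F : Finset (V × V × V)) : Prop :=
  (∀ t ∈ F, G.IsFamily t.1 t.2.1 t.2.2) ∧
  ∀ t ∈ F, ∀ t' ∈ F, t ≠ t' → ∀ v : V, ¬ (MemTriple v t ∧ MemTriple v t')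

/-- `w` is the vertex that the edge leaving `v` inside its family of `F` points to. -/
def MatchedTo (F : Finset (V × V × V)) (v w : V) : Prop :=
  ∃ t ∈ F, (t.1 = v ∧ t.2.1 = w) ∨ (t.2.1 = v ∧ t.2.2 = w) ∨ (t.2.2 = v ∧ t.1 = w)

/-- `r(v,w) < R_F(v)`: the rank of the edge `v → w` is smaller than the rank of `v` in
the matching `F` (if `v` is in no family of `F`, its rank is `+∞` and this holds
vacuously). -/
def Prefers (G : TDSMI V n) (F : Finset (V × V × V)) (v w : V) : Prop :=
  ∀ u : V, MatchedTo F v u → G.r v w < G.r v u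

/-- The directed 3-cycle `(a, b, c)` blocks the matching `F`. -/
def Blocks (G : TDSMI V n) (F : Finset (V × V × V)) (a b c : V) : Prop :=
  G.IsFamily a b c ∧ G.Prefers F a b ∧ G.Prefers F b c ∧ G.Prefers F c a

/-- A matching is weakly stable if no directed 3-cycle blocks it. -/
def WeaklyStable (G : TDSMI V n) (F : Finset (V × V × V)) : Prop :=
  ∀ a b c : V, ¬ G.Blocks F a b c

end TDSMI

def rank1Edges : List (ℕ × ℕ) := [(0,1),(1,2),(2,3),(3,4),(4,5),(5,0),(6,4),(7,8),(8,0)]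
def rank2Edges : List (ℕ × ℕ) := [(4,8),(8,6),(0,7),(1,5),(5,3),(3,1)]
def rank3Edges : List (ℕ × ℕ) := [(4,2)]

/-- Instance with the additional edge `7 → 2` of rank 2. -/
def GA : TDSMI (Fin 9) 3 where
  E v w := decide ((v.val, w.val) ∈ rank1Edges ++ (rank2Edges ++ [(7,2)]) ++ rank3Edges)
  r v w :=
    if (v.val, w.val) ∈ rank1Edges then 1
    else if (v.val, w.val) ∈ rank2Edges ++ [(7,2)] then 2
    else if (v.val, w.val) ∈ rank3Edges then 3
    else 0
  gender v := ⟨v.val % 3, Nat.mod_lt _ (by norm_num)⟩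
  gender_card := by decide
  edge_gender := by decide
  rank_bij := by decide

/-- Instance with the additional edge `6 → 1` of rank 2. -/
def GB : TDSMI (Fin 9) 3 where
  E v w := decide ((v.val, w.val) ∈ rank1Edges ++ (rank2Edges ++ [(6,1)]) ++ rank3Edges)
  r v w :=
    if (v.val, w.val) ∈ rank1Edges then 1
    else if (v.val, w.val) ∈ rank2Edges ++ [(6,1)] then 2
    else if (v.val, w.val) ∈ rank3Edges then 3
    else 0
  gender v := ⟨v.val % 3, Nat.mod_lt _ (by norm_num)⟩
  gender_card := by decide
  edge_gender := by decide
  rank_bij := by decide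

/-- Instance with both additional edges `7 → 2` and `6 → 1` of rank 2. -/
def GC : TDSMI (Fin 9) 3 where
  E v w := decide ((v.val, w.val) ∈ rank1Edges ++ (rank2Edges ++ [(7,2),(6,1)]) ++ rank3Edges)
  r v w :=
    if (v.val, w.val) ∈ rank1Edges then 1
    else if (v.val, w.val) ∈ rank2Edges ++ [(7,2),(6,1)] then 2
    else if (v.val, w.val) ∈ rank3Edges then 3
    else 0
  gender v := ⟨v.val % 3, Nat.mod_lt _ (by norm_num)⟩
  gender_card := by decide
  edge_gender := by decide
  rank_bij := by decide

/- ———————————————————— Auxiliary material for the proof ———————————————————— -/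

section AuxProof

set_option maxRecDepth 10000

abbrev T9 := Fin 9 × Fin 9 × Fin 9

lemma bor_iff (a b : Bool) : (a || b) = true ↔ a = true ∨ b = true := by simp

/-- The list of all families (directed 3-cycles), identical for `GA`, `GB`, `GC`. -/
def famsList : List T9 :=
  [(0,1,5),(0,7,8),(1,2,3),(1,5,0),(1,5,3),(2,3,1),(2,3,4),(3,1,2),(3,1,5),(3,4,2),
   (3,4,5),(4,2,3),(4,5,3),(4,8,6),(5,0,1),(5,3,1),(5,3,4),(6,4,8),(7,8,0),(8,0,7),(8,6,4)]

def manOf (t : T9) : Fin 9 :=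
  if t.1.val % 3 = 0 then t.1 else if t.2.1.val % 3 = 0 then t.2.1 else t.2.2

/- Boolean mirrors of the Prop-level definitions. -/

def memT (v : Fin 9) (t : T9) : Bool := v == t.1 || v == t.2.1 || v == t.2.2

def famB (G : TDSMI (Fin 9) 3) (a b c : Fin 9) : Bool := G.E a b && G.E b c && G.E c a

def mtL (l : List T9) (v w : Fin 9) : Bool :=
  l.any fun t => (t.1 == v && t.2.1 == w) || (t.2.1 == v && t.2.2 == w) || (t.2.2 == v && t.1 == w)

def prefL (G : TDSMI (Fin 9) 3) (l : List T9) (v w : Fin 9) : Bool :=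
  (List.finRange 9).all fun u => !(mtL l v u) || decide (G.r v w < G.r v u)

def blocksB (G : TDSMI (Fin 9) 3) (l : List T9) (a b c : Fin 9) : Bool :=
  famB G a b c && prefL G l a b && prefL G l b c && prefL G l c a

def disjT (t t' : T9) : Bool := !(memT t.1 t' || memT t.2.1 t' || memT t.2.2 t')

def disj3 (x y z : T9) : Bool :=
  (x == y || disjT x y) && (x == z || disjT x z) && (y == z || disjT y z)

def checkB (G : TDSMI (Fin 9) 3) (x y z : T9) : Bool :=
  !(disj3 x y z) || (famsList.any fun t => blocksB G [x, y, z] t.1 t.2.1 t.2.2)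

/- Soundness lemmas. -/

lemma memT_iff (v : Fin 9) (t : T9) : memT v t = true ↔ TDSMI.MemTriple v t := by
  simp [memT, TDSMI.MemTriple, or_assoc]

lemma famB_iff (G : TDSMI (Fin 9) 3) (a b c : Fin 9) :
    famB G a b c = true ↔ G.IsFamily a b c := by
  simp [famB, TDSMI.IsFamily, and_assoc]

lemma mtL_iff (l : List T9) (v w : Fin 9) :
    mtL l v w = true ↔ TDSMI.MatchedTo l.toFinset v w := by
  unfold mtL TDSMI.MatchedTo
  rw [List.any_eq_true]
  constructor <;> rintro ⟨t, ht, hp⟩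
  · exact ⟨t, List.mem_toFinset.mpr ht, by simpa [or_assoc] using hp⟩
  · exact ⟨t, List.mem_toFinset.mp ht, by simpa [or_assoc] using hp⟩

lemma prefL_iff (G : TDSMI (Fin 9) 3) (l : List T9) (v w : Fin 9) :
    prefL G l v w = true ↔ G.Prefers l.toFinset v w := by
  unfold prefL TDSMI.Prefers
  rw [List.all_eq_true]
  constructor
  · intro h u hu
    have h' := h u (List.mem_finRange u)
    rcases bor_iff _ _ |>.mp h' with h'' | h''
    · exact absurd ((mtL_iff l v u).mpr hu) (by simpa using h'')
    · exact of_decide_eq_true h''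
  · intro h u _
    by_cases hm : mtL l v u = true
    · exact bor_iff _ _ |>.mpr (Or.inr (decide_eq_true (h u ((mtL_iff l v u).mp hm))))
    · exact bor_iff _ _ |>.mpr (Or.inl (by simpa using hm))

lemma blocksB_iff (G : TDSMI (Fin 9) 3) (l : List T9) (a b c : Fin 9) :
    blocksB G l a b c = true ↔ G.Blocks l.toFinset a b c := by
  unfold blocksB TDSMI.Blocks
  rw [Bool.and_eq_true, Bool.and_eq_true, Bool.and_eq_true,
    famB_iff, prefL_iff, prefL_iff, prefL_iff]
  tauto

lemma disjT_of {t t' : T9}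
    (h : ∀ v : Fin 9, ¬ (TDSMI.MemTriple v t ∧ TDSMI.MemTriple v t')) : disjT t t' = true := by
  have hf : (memT t.1 t' || memT t.2.1 t' || memT t.2.2 t') = false := by
    rw [Bool.eq_false_iff]
    intro hb
    rcases bor_iff _ _ |>.mp hb with hb | hb
    · rcases bor_iff _ _ |>.mp hb with hb | hb
      · exact h t.1 ⟨Or.inl rfl, (memT_iff _ _).mp hb⟩
      · exact h t.2.1 ⟨Or.inr (Or.inl rfl), (memT_iff _ _).mp hb⟩
    · exact h t.2.2 ⟨Or.inr (Or.inr rfl), (memT_iff _ _).mp hb⟩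
  simp [disjT, hf]

lemma pairOk {a b : T9}
    (h : a = b ∨ ∀ v : Fin 9, ¬ (TDSMI.MemTriple v a ∧ TDSMI.MemTriple v b)) :
    (a == b || disjT a b) = true := by
  rcases h with rfl | h
  · simp
  · simp [disjT_of h]

lemma disj3_of {G : TDSMI (Fin 9) 3} {x y z : T9} (hM : G.IsMatching {x, y, z}) :
    disj3 x y z = true := by
  have hx : x ∈ ({x, y, z} : Finset T9) := by simp
  have hy : y ∈ ({x, y, z} : Finset T9) := by simp
  have hz : z ∈ ({x, y, z} : Finset T9) := by simp
  have key : ∀ a ∈ ({x, y, z} : Finset T9), ∀ b ∈ ({x, y, z} : Finset T9),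
      (a == b || disjT a b) = true := by
    intro a ha b hb
    refine pairOk (or_iff_not_imp_left.mpr fun hne => fun v hv => ?_)
    exact hM.2 a ha b hb hne v hv
  simp only [disj3, Bool.and_eq_true]
  exact ⟨⟨key x hx y hy, key x hx z hz⟩, key y hy z hz⟩

lemma toFinset_three (x y z : T9) : ([x, y, z] : List T9).toFinset = {x, y, z} := by
  simp

/-- The master lemma: from the three certificate facts, no weakly stable matching. -/
lemma noStable (G : TDSMI (Fin 9) 3)
    (hfam : ∀ t : T9, G.IsFamily t.1 t.2.1 t.2.2 → t ∈ famsList)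
    (hman : ∀ t ∈ famsList, TDSMI.MemTriple (manOf t) t ∧ manOf t ∈ ({0,3,6} : Finset (Fin 9)))
    (hemp : G.Blocks ∅ 0 1 5)
    (hchk : ∀ x ∈ famsList, ∀ y ∈ famsList, ∀ z ∈ famsList, checkB G x y z = true) :
    ¬ ∃ F : Finset T9, G.IsMatching F ∧ G.WeaklyStable F := by
  rintro ⟨F, hM, hS⟩
  rcases Finset.eq_empty_or_nonempty F with rfl | hne
  · exact hS 0 1 5 hemp
  have hsub : ∀ t ∈ F, t ∈ famsList := fun t ht => hfam t (hM.1 t ht)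
  -- the "man" of each family is a vertex of it, and lies in {0,3,6}
  have hinj : Set.InjOn manOf F := by
    intro a ha b hb hab
    by_contra hne'
    exact hM.2 a ha b hb hne' (manOf a)
      ⟨(hman a (hsub a ha)).1, hab ▸ (hman b (hsub b hb)).1⟩
  have hcard : F.card ≤ 3 := by
    have h36 : ({0,3,6} : Finset (Fin 9)).card = 3 := by decide
    calc F.card ≤ ({0,3,6} : Finset (Fin 9)).card :=
          Finset.card_le_card_of_injOn manOf (fun a ha => (hman a (hsub a ha)).2) hinj
      _ = 3 := h36
  have hpos : 1 ≤ F.card := Finset.card_pos.mpr hne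
  -- F = {x, y, z} for some x, y, z
  have hxyz : ∃ x y z, F = {x, y, z} := by
    interval_cases h : F.card
    · obtain ⟨a, rfl⟩ := Finset.card_eq_one.mp h
      exact ⟨a, a, a, by simp⟩
    · obtain ⟨a, b, -, rfl⟩ := Finset.card_eq_two.mp h
      exact ⟨a, b, b, by simp⟩
    · obtain ⟨a, b, c, -, -, -, rfl⟩ := Finset.card_eq_three.mp h
      exact ⟨a, b, c, rfl⟩
  obtain ⟨x, y, z, rfl⟩ := hxyz
  have hx : x ∈ famsList := hsub x (by simp)
  have hy : y ∈ famsList := hsub y (by simp)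
  have hz : z ∈ famsList := hsub z (by simp)
  have hc := hchk x hx y hy z hz
  rcases bor_iff _ _ |>.mp hc with h | h
  · simp [disj3_of hM] at h
  · obtain ⟨t, -, hb⟩ := List.any_eq_true.mp h
    have : G.Blocks {x, y, z} t.1 t.2.1 t.2.2 := by
      rw [← toFinset_three]; exact (blocksB_iff G _ _ _ _).mp hb
    exact hS t.1 t.2.1 t.2.2 this

end AuxProof

/- Boolean certificate that every family is in `famsList`. -/
def famChk (G : TDSMI (Fin 9) 3) : Bool :=
  (List.finRange 9).all fun a => (List.finRange 9).all fun b => (List.finRange 9).all fun c =>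
    !(famB G a b c) || decide (((a, b, c) : T9) ∈ famsList)

lemma famChk_sound {G : TDSMI (Fin 9) 3} (h : famChk G = true) :
    ∀ t : T9, G.IsFamily t.1 t.2.1 t.2.2 → t ∈ famsList := by
  rintro ⟨a, b, c⟩ hf
  have h1 := List.all_eq_true.mp
    (List.all_eq_true.mp (List.all_eq_true.mp h a (List.mem_finRange a)) b (List.mem_finRange b))
    c (List.mem_finRange c)
  rcases bor_iff _ _ |>.mp h1 with h' | h'
  · exact absurd ((famB_iff G a b c).mpr hf) (by simpa using h')
  · exact of_decide_eq_true h'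
section Certs
set_option maxRecDepth 10000

instance (v : Fin 9) (t : T9) : Decidable (TDSMI.MemTriple v t) := by
  unfold TDSMI.MemTriple; infer_instance

lemma hfamA : ∀ t : T9, GA.IsFamily t.1 t.2.1 t.2.2 → t ∈ famsList :=
  famChk_sound (by decide)
lemma hfamB : ∀ t : T9, GB.IsFamily t.1 t.2.1 t.2.2 → t ∈ famsList :=
  famChk_sound (by decide)
lemma hfamC : ∀ t : T9, GC.IsFamily t.1 t.2.1 t.2.2 → t ∈ famsList :=
  famChk_sound (by decide)

lemma hman : ∀ t ∈ famsList,
    TDSMI.MemTriple (manOf t) t ∧ manOf t ∈ ({0,3,6} : Finset (Fin 9)) := by decide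

lemma hempOf (G : TDSMI (Fin 9) 3) (h : blocksB G [] 0 1 5 = true) : G.Blocks ∅ 0 1 5 := by
  have := (blocksB_iff G [] 0 1 5).mp h
  simpa using this

lemma hchkOf (G : TDSMI (Fin 9) 3)
    (h : (famsList.all fun x => famsList.all fun y => famsList.all fun z =>
      checkB G x y z) = true) :
    ∀ x ∈ famsList, ∀ y ∈ famsList, ∀ z ∈ famsList, checkB G x y z = true := fun x hx y hy z hz =>
  List.all_eq_true.mp (List.all_eq_true.mp (List.all_eq_true.mp h x hx) y hy) z hz

end Certs

set_option maxRecDepth 10000 in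
set_option maxHeartbeats 4000000 in
/-- None of the three enlarged instances admits a weakly stable matching. -/
theorem stmt_5 :
    (¬ ∃ F : Finset (Fin 9 × Fin 9 × Fin 9), GA.IsMatching F ∧ GA.WeaklyStable F) ∧
    (¬ ∃ F : Finset (Fin 9 × Fin 9 × Fin 9), GB.IsMatching F ∧ GB.WeaklyStable F) ∧
    (¬ ∃ F : Finset (Fin 9 × Fin 9 × Fin 9), GC.IsMatching F ∧ GC.WeaklyStable F) :=
  ⟨noStable GA hfamA hman (hempOf GA (by decide)) (hchkOf GA (by decide)),
   noStable GB hfamB hman (hempOf GB (by decide)) (hchkOf GB (by decide)),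
   noStable GC hfamC hman (hempOf GC (by decide)) (hchkOf GC (by decide))⟩
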